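/- Let G : ℝ → ℝ be bounded, increasing, and left-continuous with lim_{x→−∞} G(x) = 0. Define y(ξ) = sup{x ∈ ℝ : x + G(x) < ξ}. Then for every ξ ∈ ℝ, y(ξ) + G(y(ξ)) ≤ ξ ≤ y(ξ) + G(y(ξ)+), where G(x+) denotes the right limit of G at x. In particular, G(y(ξ)) ≤ ξ − y(ξ) ≤ G(y(ξ)+). -/
import Mathlib

open MeasureTheory Set Function Filter

/-- For `G` bounded, increasing, left-continuous with `G → 0` at `−∞`, and
`y(ξ) = sup{x : x + G(x) < ξ}`, one has
`y(ξ) + G(y(ξ)) ≤ ξ ≤ y(ξ) + G(y(ξ)+)`, hence `G(y(ξ)) ≤ ξ − y(ξ) ≤ G(y(ξ)+)`. -/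
theorem lagrangian_char_bracket
    (G : ℝ → ℝ)
    (hbdd : ∃ M : ℝ, ∀ x, |G x| ≤ M)
    (hmono : Monotone G)
    (hleft : ∀ x : ℝ, ContinuousWithinAt G (Set.Iio x) x)
    (hlim : Tendsto G atBot (nhds 0))
    (y : ℝ → ℝ) (hy : ∀ ξ, y ξ = sSup {x : ℝ | x + G x < ξ}) :
    ∀ ξ : ℝ,
      (y ξ + G (y ξ) ≤ ξ ∧ ξ ≤ y ξ + Function.rightLim G (y ξ)) ∧
      (G (y ξ) ≤ ξ - y ξ ∧ ξ - y ξ ≤ Function.rightLim G (y ξ)) := by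
  intro ξ
  obtain ⟨M, hM⟩ := hbdd
  set S := {x : ℝ | x + G x < ξ} with hS
  have hne : S.Nonempty := by
    refine ⟨min (ξ - M - 1) 0, ?_⟩
    have h1 : min (ξ - M - 1) 0 ≤ ξ - M - 1 := min_le_left _ _
    have h2 := hM (min (ξ - M - 1) 0)
    simp only [hS, Set.mem_setOf_eq]
    have := (abs_le.mp h2).2
    linarith
  have hbd : BddAbove S := by
    refine ⟨ξ + M, fun x hx => ?_⟩
    have h2 := (abs_le.mp (hM x)).1
    have : x + G x < ξ := hx
    linarith
  have hyx : y ξ = sSup S := hy ξ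
  have hlt : ∀ x < y ξ, x + G x < ξ := by
    intro x hx
    rw [hyx] at hx
    obtain ⟨s, hs, hxs⟩ := exists_lt_of_lt_csSup hne hx
    have : x + G x ≤ s + G s := by
      have := hmono hxs.le
      linarith
    exact lt_of_le_of_lt this hs
  have h1 : y ξ + G (y ξ) ≤ ξ := by
    -- use left continuity at y ξ
    have htend : Tendsto (fun x => x + G x) (nhdsWithin (y ξ) (Set.Iio (y ξ)))
        (nhds (y ξ + G (y ξ))) :=
      (continuousWithinAt_id.add (hleft (y ξ))).tendsto
    have hne' : (nhdsWithin (y ξ) (Set.Iio (y ξ))).NeBot := by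
      exact nhdsLT_neBot (y ξ)
    refine le_of_tendsto htend ?_
    filter_upwards [self_mem_nhdsWithin] with x hx
    exact (hlt x hx).le
  have h2 : ξ ≤ y ξ + Function.rightLim G (y ξ) := by
    have hge : ∀ x > y ξ, ξ ≤ x + G x := by
      intro x hx
      by_contra h
      push_neg at h
      have : x ∈ S := h
      have := le_csSup hbd this
      rw [hyx] at hx
      linarith
    have htend : Tendsto (fun x => x + G x) (nhdsWithin (y ξ) (Set.Ioi (y ξ)))
        (nhds (y ξ + Function.rightLim G (y ξ))) := by
      have := hmono.tendsto_rightLim (y ξ)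
      exact (tendsto_id.mono_left nhdsWithin_le_nhds |>.comp tendsto_id |>.congr (fun x => rfl)
        |>.add this) |>.congr (fun x => rfl) |>.mono_left le_rfl
    have hne' : (nhdsWithin (y ξ) (Set.Ioi (y ξ))).NeBot :=
      nhdsGT_neBot (y ξ)
    refine ge_of_tendsto htend ?_
    filter_upwards [self_mem_nhdsWithin] with x hx
    exact hge x hx
  exact ⟨⟨h1, h2⟩, by linarith, by linarith⟩
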